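/- Let A_1, ..., A_n be independent real-valued random variables with E[A_i] = c_i and Var(A_i) ≤ (ν c_i)^2 for each i, where c_i > 0 and 0 < ν ≤ ε/(16√n) for some 0 < ε < 1. Then the product F = ∏ A_i satisfies E[F] = ∏ c_i and Var(F) ≤ (ε²/128)·(∏ c_i)². -/

import Mathlib

open MeasureTheory ProbabilityTheory

private lemma pow_bound : ∀ (n : ℕ) (x : ℝ), 0 ≤ x → 2 * n * x ≤ 1 →
    (1 + x) ^ n ≤ 1 + 2 * n * x := by
  intro n
  induction n with
  | zero => intro x hx _; simp
  | succ n ih =>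
    intro x hx h
    have hn : 2 * (n : ℝ) * x ≤ 1 := by
      have : (n : ℝ) ≤ (n + 1 : ℕ) := by push_cast; linarith
      nlinarith [Nat.cast_nonneg (α := ℝ) n]
    have h1 := ih x hx hn
    have : (1 + x) ^ (n + 1) = (1 + x) ^ n * (1 + x) := by ring
    rw [this]
    have h2 : (1 + x) ^ n * (1 + x) ≤ (1 + 2 * n * x) * (1 + x) := by
      apply mul_le_mul_of_nonneg_right h1; linarith
    push_cast
    nlinarith [Nat.cast_nonneg (α := ℝ) n]

private lemma prod_aux {Ω : Type*} [MeasurableSpace Ω] {μ : Measure Ω} [IsProbabilityMeasure μ]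
    {n : ℕ} {A : Fin n → Ω → ℝ} (hmeas : ∀ i, Measurable (A i))
    (hint : ∀ i, Integrable (A i) μ)
    (hind : iIndepFun A μ) (s : Finset (Fin n)) :
    Integrable (fun ω => ∏ i ∈ s, A i ω) μ ∧
    ∫ ω, ∏ i ∈ s, A i ω ∂μ = ∏ i ∈ s, ∫ ω, A i ω ∂μ := by
  classical
  induction s using Finset.induction with
  | empty => simp
  | @insert a s ha ih =>
    have hindep : IndepFun (∏ j ∈ s, A j) (A a) μ :=
      hind.indepFun_finsetProd_of_notMem hmeas ha
    have hps : (∏ j ∈ s, A j) = fun ω => ∏ j ∈ s, A j ω := by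
      funext ω; simp
    rw [hps] at hindep
    have hint' : Integrable (fun ω => (∏ j ∈ s, A j ω) * A a ω) μ :=
      hindep.integrable_mul ih.1 (hint a)
    have heq : (fun ω => ∏ i ∈ insert a s, A i ω)
        = fun ω => (∏ j ∈ s, A j ω) * A a ω := by
      funext ω; rw [Finset.prod_insert ha]; ring
    constructor
    · rw [heq]; exact hint'
    · rw [heq, Finset.prod_insert ha]
      have hmul : ∫ ω, (∏ j ∈ s, A j ω) * A a ω ∂μ
          = (∫ ω, ∏ j ∈ s, A j ω ∂μ) * ∫ ω, A a ω ∂μ :=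
        hindep.integral_fun_mul_eq_mul_integral ih.1.aestronglyMeasurable (hint a).aestronglyMeasurable
      rw [hmul, ih.2]; ring

theorem stmt_2 {Ω : Type*} [MeasurableSpace Ω] (μ : Measure Ω) [IsProbabilityMeasure μ]
    (n : ℕ) (hn : 0 < n) (A : Fin n → Ω → ℝ) (c : Fin n → ℝ) (ν ε : ℝ)
    (hε0 : 0 < ε) (hε1 : ε < 1) (hν0 : 0 < ν) (hν : ν ≤ ε / (16 * Real.sqrt n))
    (hc : ∀ i, 0 < c i)
    (hmeas : ∀ i, Measurable (A i)) (hL2 : ∀ i, MemLp (A i) 2 μ)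
    (hind : iIndepFun A μ)
    (hE : ∀ i, ∫ ω, A i ω ∂μ = c i)
    (hVar : ∀ i, variance (A i) μ ≤ (ν * c i) ^ 2) :
    (∫ ω, ∏ i, A i ω ∂μ = ∏ i, c i) ∧
    variance (fun ω => ∏ i, A i ω) μ ≤ ε ^ 2 / 128 * (∏ i, c i) ^ 2 := by
  have hint : ∀ i, Integrable (A i) μ := fun i => (hL2 i).integrable one_le_two
  have h1 := prod_aux hmeas hint hind Finset.univ
  have part1 : ∫ ω, ∏ i, A i ω ∂μ = ∏ i, c i := by
    rw [h1.2]; exact Finset.prod_congr rfl fun i _ => hE i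
  -- squares
  have hmeasB : ∀ i, Measurable (fun ω => (A i ω) ^ 2) :=
    fun i => (hmeas i).pow_const 2
  have hintB : ∀ i, Integrable (fun ω => (A i ω) ^ 2) μ := fun i => by
    have := (hL2 i).integrable_sq
    simpa [sq] using this
  have hindB : iIndepFun (fun i ω => (A i ω) ^ 2) μ :=
    hind.comp (fun _ x => x ^ 2) (fun _ => measurable_id.pow_const 2)
  have h2 := prod_aux (A := fun i ω => (A i ω) ^ 2) hmeasB hintB hindB Finset.univ
  -- F is Memℒp 2
  have hFmeas : Measurable (fun ω => ∏ i, A i ω) :=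
    Finset.measurable_prod _ fun i _ => hmeas i
  have hsq : (fun ω => (∏ i, A i ω) ^ 2) = fun ω => ∏ i, (A i ω) ^ 2 := by
    funext ω; rw [← Finset.prod_pow]
  have hFL2 : MemLp (fun ω => ∏ i, A i ω) 2 μ := by
    rw [memLp_two_iff_integrable_sq hFmeas.aestronglyMeasurable]
    show Integrable (fun ω => (∏ i, A i ω) ^ 2) μ
    rw [hsq]; exact h2.1
  -- variance formula
  have hvar : variance (fun ω => ∏ i, A i ω) μ
      = (∏ i, ∫ ω, (A i ω) ^ 2 ∂μ) - (∏ i, c i) ^ 2 := by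
    rw [variance_eq_sub hFL2, ← h2.2, part1]
    congr 1
    rw [← hsq]; rfl
  -- bounds on second moments
  set m : Fin n → ℝ := fun i => ∫ ω, (A i ω) ^ 2 ∂μ with hm
  have hm_nonneg : ∀ i, 0 ≤ m i := fun i => integral_nonneg fun ω => sq_nonneg _
  have hm_le : ∀ i, m i ≤ (1 + ν ^ 2) * (c i) ^ 2 := by
    intro i
    have hv := variance_eq_sub (hL2 i)
    have hv' : variance (A i) μ = m i - (c i) ^ 2 := by
      rw [hv, hE i]; rfl
    have := hVar i
    rw [hv'] at this
    nlinarith [sq_nonneg (c i), sq_nonneg ν]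
  have hprod_le : (∏ i, m i) ≤ (1 + ν ^ 2) ^ n * (∏ i, c i) ^ 2 := by
    calc (∏ i, m i) ≤ ∏ i, (1 + ν ^ 2) * (c i) ^ 2 :=
          Finset.prod_le_prod (fun i _ => hm_nonneg i) (fun i _ => hm_le i)
      _ = (1 + ν ^ 2) ^ n * (∏ i, c i) ^ 2 := by
          rw [Finset.prod_mul_distrib, Finset.prod_const, Finset.prod_pow]
          simp
  -- numeric bound
  have hsn : (0:ℝ) < Real.sqrt n := Real.sqrt_pos.mpr (by exact_mod_cast hn)
  have hν2 : ν ^ 2 ≤ ε ^ 2 / (256 * n) := by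
    have h1 : ν ^ 2 ≤ (ε / (16 * Real.sqrt n)) ^ 2 :=
      pow_le_pow_left₀ hν0.le hν 2
    have h2 : (ε / (16 * Real.sqrt n)) ^ 2 = ε ^ 2 / (256 * n) := by
      rw [div_pow, mul_pow, Real.sq_sqrt (by positivity : (0:ℝ) ≤ (n:ℝ))]
      norm_num
    linarith
  have hn' : (0:ℝ) < n := by exact_mod_cast hn
  have h2nν : 2 * n * ν ^ 2 ≤ ε ^ 2 / 128 := by
    have : 2 * (n:ℝ) * (ε ^ 2 / (256 * n)) = ε ^ 2 / 128 := by
      field_simp; ring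
    nlinarith
  have hle1 : 2 * (n:ℝ) * ν ^ 2 ≤ 1 := by nlinarith
  have hpow : (1 + ν ^ 2) ^ n ≤ 1 + 2 * n * ν ^ 2 :=
    pow_bound n (ν ^ 2) (sq_nonneg ν) hle1
  refine ⟨part1, ?_⟩
  rw [hvar]
  have hprodc : (0:ℝ) ≤ (∏ i, c i) ^ 2 := sq_nonneg _
  calc (∏ i, m i) - (∏ i, c i) ^ 2
      ≤ (1 + ν ^ 2) ^ n * (∏ i, c i) ^ 2 - (∏ i, c i) ^ 2 := by linarith
    _ = ((1 + ν ^ 2) ^ n - 1) * (∏ i, c i) ^ 2 := by ring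
    _ ≤ (2 * n * ν ^ 2) * (∏ i, c i) ^ 2 := by
        apply mul_le_mul_of_nonneg_right _ hprodc; linarith
    _ ≤ ε ^ 2 / 128 * (∏ i, c i) ^ 2 :=
        mul_le_mul_of_nonneg_right h2nν hprodc
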